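/- Let n ≥ 1 and for i = 1,…,n let f_i : ℝ^{d₁} → ℝ be convex, C_f-Lipschitz and nondecreasing, and let g_i : ℝ^d → ℝ^{d₁} be C_g-Lipschitz with each coordinate function of g_i being ρ_g-weakly convex. Let λ > 0. Then F_λ(w) = (1/n)∑_{i=1}^n f_{i,λ}(g_i(w)) is (√d₁·C_f·ρ_g)-weakly convex on ℝ^d, where f_{i,λ} is the Moreau envelope of f_i. -/

import Mathlib

open scoped RealInnerProductSpace BigOperators

set_option maxHeartbeats 1000000

private lemma aux_comb_norm_sq {E : Type*} [NormedAddCommGroup E] [InnerProductSpace ℝ E]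
    (x y : E) (a b : ℝ) (hab : a + b = 1) :
    ‖a•x + b•y‖^2 = a*‖x‖^2 + b*‖y‖^2 - a*b*‖x-y‖^2 := by
  have h1 : ‖a•x + b•y‖^2 = a^2*‖x‖^2 + 2*(a*b)*⟪x, y⟫ + b^2*‖y‖^2 := by
    rw [@norm_add_sq_real]
    rw [norm_smul, norm_smul, real_inner_smul_left, real_inner_smul_right]
    simp [mul_pow, sq_abs]
    ring
  have h2 : ‖x - y‖^2 = ‖x‖^2 - 2*⟪x, y⟫ + ‖y‖^2 := by
    rw [@norm_sub_sq_real]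
  rw [h1, h2]
  linear_combination (a*‖x‖^2 + b*‖y‖^2) * hab

private lemma aux_coord {d : ℕ} (u : EuclideanSpace ℝ (Fin d)) (j : Fin d) : |u j| ≤ ‖u‖ := by
  rw [EuclideanSpace.norm_eq]
  rw [show |u j| = Real.sqrt (|u j|^2) by rw [Real.sqrt_sq_eq_abs, abs_abs]]
  apply Real.sqrt_le_sqrt
  have := Finset.single_le_sum (f := fun i => ‖u i‖^2) (fun i _ => sq_nonneg _) (Finset.mem_univ j)
  simpa [Real.norm_eq_abs] using this

/-- With `f i` convex, `Cf`-Lipschitz and nondecreasing, and `g i` `Cg`-Lipschitz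
with `ρg`-weakly-convex coordinate functions, and `λ > 0`, the outer-smoothed objective
`F_λ(w) = (1/n) ∑ i f_{i,λ}(g i w)` is `(√d₁·Cf·ρg)`-weakly convex. -/
theorem stmt12 (d d₁ n : ℕ) (hn : 1 ≤ n)
    (f : Fin n → EuclideanSpace ℝ (Fin d₁) → ℝ)
    (g : Fin n → EuclideanSpace ℝ (Fin d) → EuclideanSpace ℝ (Fin d₁))
    (Cf Cg ρg lam : ℝ) (hlam : 0 < lam)
    (hf_conv : ∀ i, ConvexOn ℝ Set.univ (f i))
    (hf_lip : ∀ i (x y : EuclideanSpace ℝ (Fin d₁)), |f i x - f i y| ≤ Cf * ‖x - y‖)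
    (hf_mono : ∀ i (x y : EuclideanSpace ℝ (Fin d₁)), (∀ j, x j ≤ y j) → f i x ≤ f i y)
    (hg_lip : ∀ i (x y : EuclideanSpace ℝ (Fin d)), ‖g i x - g i y‖ ≤ Cg * ‖x - y‖)
    (hg_wc : ∀ i (j : Fin d₁),
      ConvexOn ℝ Set.univ (fun w : EuclideanSpace ℝ (Fin d) => g i w j + ρg / 2 * ‖w‖ ^ 2)) :
    ConvexOn ℝ Set.univ
      (fun w : EuclideanSpace ℝ (Fin d) =>
        ((n : ℝ)⁻¹ * ∑ i, ⨅ v, f i v + ‖g i w - v‖ ^ 2 / (2 * lam)) +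
          Real.sqrt d₁ * Cf * ρg / 2 * ‖w‖ ^ 2) := by
  classical
  -- Case d₁ = 0 : the whole function is constant.
  rcases Nat.eq_zero_or_pos d₁ with hd₁ | hd₁
  · subst hd₁
    have key : ∀ (i : Fin n) (w : EuclideanSpace ℝ (Fin d)),
        (⨅ v, f i v + ‖g i w - v‖^2/(2*lam)) = f i 0 := by
      intro i w
      have h : ∀ v : EuclideanSpace ℝ (Fin 0),
          f i v + ‖g i w - v‖^2/(2*lam) = f i 0 := by
        intro v
        rw [Subsingleton.elim (g i w - v) 0, Subsingleton.elim v 0]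
        simp
      simp only [h]
      exact ciInf_const
    have hconst : (fun w : EuclideanSpace ℝ (Fin d) =>
        ((n : ℝ)⁻¹ * ∑ i, ⨅ v, f i v + ‖g i w - v‖ ^ 2 / (2 * lam)) +
          Real.sqrt (0:ℕ) * Cf * ρg / 2 * ‖w‖ ^ 2)
        = fun _ => (n : ℝ)⁻¹ * ∑ i, f i 0 := by
      funext w
      simp only [key, Nat.cast_zero, Real.sqrt_zero]
      ring
    rw [hconst]
    exact convexOn_const _ convex_univ
  -- Cf ≥ 0
  have hCf : 0 ≤ Cf := by
    have h0 := hf_lip ⟨0, hn⟩ (EuclideanSpace.single ⟨0, hd₁⟩ 1) 0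
    rw [sub_zero, EuclideanSpace.norm_single, norm_one, mul_one] at h0
    exact le_trans (abs_nonneg _) h0
  -- Case d = 0 : the domain is a single point.
  rcases Nat.eq_zero_or_pos d with hd | hd
  · subst hd
    refine ⟨convex_univ, fun x _ y _ a b ha hb hab => ?_⟩
    have hxy : y = x := Subsingleton.elim _ _
    have hm : a • x + b • y = x := Subsingleton.elim _ _
    rw [hxy]
    rw [Subsingleton.elim (a • x + b • x) x, smul_eq_mul, smul_eq_mul, ← add_mul, hab, one_mul]
  -- Cg ≥ 0
  have hCg : 0 ≤ Cg := by
    have h0 := hg_lip ⟨0, hn⟩ (EuclideanSpace.single ⟨0, hd⟩ 1) 0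
    rw [sub_zero, EuclideanSpace.norm_single, norm_one, mul_one] at h0
    exact le_trans (norm_nonneg _) h0
  -- ρg ≥ 0 (otherwise a Lipschitz coordinate would be strongly convex)
  have hρg : 0 ≤ ρg := by
    by_contra hneg
    push_neg at hneg
    set i0 : Fin n := ⟨0, hn⟩
    set j0 : Fin d₁ := ⟨0, hd₁⟩
    set e : EuclideanSpace ℝ (Fin d) := EuclideanSpace.single ⟨0, hd⟩ 1 with he_def
    have he : ‖e‖ = 1 := by rw [he_def, EuclideanSpace.norm_single, norm_one]
    set s : ℝ := 8 * (Cg + 1) / (-ρg) with hs_def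
    have hs : 0 < s := div_pos (by linarith) (by linarith)
    have hρne : ρg ≠ 0 := ne_of_lt hneg
    have hps : ρg * s = -(8 * (Cg + 1)) := by
      rw [hs_def]
      field_simp
    have hc := (hg_wc i0 j0).2 (Set.mem_univ (s • e)) (Set.mem_univ (0 : EuclideanSpace ℝ (Fin d)))
      (by norm_num : (0:ℝ) ≤ 1/2) (by norm_num : (0:ℝ) ≤ 1/2) (by norm_num)
    simp only [smul_eq_mul] at hc
    have hmid : (1/2 : ℝ) • (s • e) + (1/2 : ℝ) • (0 : EuclideanSpace ℝ (Fin d)) = (s/2) • e := by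
      rw [smul_zero, add_zero, smul_smul, show (1/2 : ℝ) * s = s/2 by ring]
    rw [hmid] at hc
    have h1 : ‖(s/2) • e‖ = s/2 := by
      rw [norm_smul, he, mul_one, Real.norm_eq_abs, abs_of_pos (by linarith)]
    have h2 : ‖s • e‖ = s := by
      rw [norm_smul, he, mul_one, Real.norm_eq_abs, abs_of_pos hs]
    rw [h1, h2, norm_zero] at hc
    have lip : ∀ u w : EuclideanSpace ℝ (Fin d), |g i0 u j0 - g i0 w j0| ≤ Cg * ‖u - w‖ := by
      intro u w
      have ha := aux_coord (g i0 u - g i0 w) j0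
      have hb := hg_lip i0 u w
      have hc' : (g i0 u - g i0 w) j0 = g i0 u j0 - g i0 w j0 := rfl
      rw [hc'] at ha
      linarith
    have la := lip ((s/2) • e) 0
    have lb := lip (s • e) 0
    rw [sub_zero, h1] at la
    rw [sub_zero, h2] at lb
    have la' := (abs_le.1 la).1
    have lb' := (abs_le.1 lb).2
    have e1 : ρg/2 * (s/2)^2 = -(Cg + 1) * s := by linear_combination (s/8) * hps
    have e2 : ρg/2 * s^2 = -(4*(Cg + 1)) * s := by linear_combination (s/2) * hps
    nlinarith [hc, la', lb', hs, e1, e2]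
  -- Main case.  First, facts about the Moreau envelopes.
  have hbdd : ∀ (i : Fin n) (u : EuclideanSpace ℝ (Fin d₁)),
      BddBelow (Set.range fun v => f i v + ‖u - v‖^2/(2*lam)) := by
    intro i u
    refine ⟨f i u - lam * Cf^2 / 2, ?_⟩
    rintro _ ⟨v, rfl⟩
    have h1 := (abs_le.1 (hf_lip i u v)).2
    have key : Cf * ‖u - v‖ - lam * Cf^2 / 2 ≤ ‖u - v‖^2/(2*lam) := by
      rw [le_div_iff₀ (by linarith : (0:ℝ) < 2*lam)]
      nlinarith [sq_nonneg (‖u - v‖ - lam * Cf)]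
    simp only [Set.mem_setOf_eq]
    linarith
  have hmem : ∀ (i : Fin n) (u v : EuclideanSpace ℝ (Fin d₁)),
      (⨅ v', f i v' + ‖u - v'‖^2/(2*lam)) ≤ f i v + ‖u - v‖^2/(2*lam) :=
    fun i u v => ciInf_le (hbdd i u) v
  -- monotonicity of the envelope
  have hEmono : ∀ (i : Fin n) (u u' : EuclideanSpace ℝ (Fin d₁)), (∀ j, u j ≤ u' j) →
      (⨅ v, f i v + ‖u - v‖^2/(2*lam)) ≤ ⨅ v, f i v + ‖u' - v‖^2/(2*lam) := by
    intro i u u' hle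
    refine le_ciInf fun v => ?_
    have h1 := hmem i u (v - (u' - u))
    have h2 : f i (v - (u' - u)) ≤ f i v := by
      refine hf_mono i _ _ fun j => ?_
      have : (v - (u' - u)) j = v j - (u' j - u j) := rfl
      rw [this]
      linarith [hle j]
    have h3 : u - (v - (u' - u)) = u' - v := by abel
    rw [h3] at h1
    linarith
  -- one-sided Lipschitz bound for the envelope
  have hElip : ∀ (i : Fin n) (u u' : EuclideanSpace ℝ (Fin d₁)),
      (⨅ v, f i v + ‖u' - v‖^2/(2*lam)) ≤ (⨅ v, f i v + ‖u - v‖^2/(2*lam)) + Cf * ‖u' - u‖ := by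
    intro i u u'
    rw [← sub_le_iff_le_add]
    refine le_ciInf fun v => ?_
    have h1 := hmem i u' (v + (u' - u))
    have h2 : u' - (v + (u' - u)) = u - v := by abel
    rw [h2] at h1
    have h3 : f i (v + (u' - u)) ≤ f i v + Cf * ‖u' - u‖ := by
      have h4 := (abs_le.1 (hf_lip i (v + (u' - u)) v)).2
      have h5 : v + (u' - u) - v = u' - u := by abel
      rw [h5] at h4
      linarith
    linarith
  -- multiplying an infimum by a nonnegative constant
  have hmul : ∀ (c z : ℝ), 0 ≤ c → ∀ (i : Fin n) (u : EuclideanSpace ℝ (Fin d₁)),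
      (∀ v, z ≤ c * (f i v + ‖u - v‖^2/(2*lam))) →
      z ≤ c * ⨅ v, f i v + ‖u - v‖^2/(2*lam) := by
    intro c z hc i u H
    rcases eq_or_lt_of_le hc with h | h
    · have h0 := H 0
      rw [← h, zero_mul] at h0 ⊢
      exact h0
    · exact (div_le_iff₀' h).mp (le_ciInf fun v => (div_le_iff₀' h).mpr (H v))
  -- convexity of the envelope
  have hEconv : ∀ (i : Fin n) (x y : EuclideanSpace ℝ (Fin d₁)) (a b : ℝ),
      0 ≤ a → 0 ≤ b → a + b = 1 →
      (⨅ v, f i v + ‖(a • x + b • y) - v‖^2/(2*lam)) ≤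
        a * (⨅ v, f i v + ‖x - v‖^2/(2*lam)) + b * (⨅ v, f i v + ‖y - v‖^2/(2*lam)) := by
    intro i x y a b ha hb hab
    have key : ∀ vx vy, (⨅ v, f i v + ‖(a • x + b • y) - v‖^2/(2*lam)) ≤
        a * (f i vx + ‖x - vx‖^2/(2*lam)) + b * (f i vy + ‖y - vy‖^2/(2*lam)) := by
      intro vx vy
      have h1 := hmem i (a • x + b • y) (a • vx + b • vy)
      have h2 : f i (a • vx + b • vy) ≤ a * f i vx + b * f i vy := by
        have := (hf_conv i).2 (Set.mem_univ vx) (Set.mem_univ vy) ha hb hab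
        simpa using this
      have h3 : (a • x + b • y) - (a • vx + b • vy) = a • (x - vx) + b • (y - vy) := by
        rw [smul_sub, smul_sub]; abel
      have h4 : ‖a • (x - vx) + b • (y - vy)‖^2 ≤ a * ‖x - vx‖^2 + b * ‖y - vy‖^2 := by
        rw [aux_comb_norm_sq _ _ a b hab]
        nlinarith [mul_nonneg (mul_nonneg ha hb) (sq_nonneg ‖(x - vx) - (y - vy)‖)]
      rw [h3] at h1
      have h5 : ‖a • (x - vx) + b • (y - vy)‖^2/(2*lam)
          ≤ (a * ‖x - vx‖^2 + b * ‖y - vy‖^2)/(2*lam) :=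
        div_le_div_of_nonneg_right h4 (by linarith)
      have h6 : (a * ‖x - vx‖^2 + b * ‖y - vy‖^2)/(2*lam)
          = a * (‖x - vx‖^2/(2*lam)) + b * (‖y - vy‖^2/(2*lam)) := by ring
      rw [h6] at h5
      linarith
    have step1 : ∀ vx, (⨅ v, f i v + ‖(a • x + b • y) - v‖^2/(2*lam))
        - a * (f i vx + ‖x - vx‖^2/(2*lam)) ≤ b * ⨅ v, f i v + ‖y - v‖^2/(2*lam) := by
      intro vx
      exact hmul b _ hb i y fun vy => by linarith [key vx vy]
    have step2 : (⨅ v, f i v + ‖(a • x + b • y) - v‖^2/(2*lam))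
        - b * (⨅ v, f i v + ‖y - v‖^2/(2*lam)) ≤ a * ⨅ v, f i v + ‖x - v‖^2/(2*lam) :=
      hmul a _ ha i x fun vx => by linarith [step1 vx]
    linarith
  -- the "all ones" vector
  set O : EuclideanSpace ℝ (Fin d₁) := (WithLp.equiv 2 _).symm (fun _ => (1:ℝ)) with hO_def
  have hO : ‖O‖ = Real.sqrt d₁ := by
    rw [EuclideanSpace.norm_eq]; simp [hO_def]
  -- Now the main convexity statement.
  refine ⟨convex_univ, fun x _ y _ a b ha hb hab => ?_⟩
  simp only [smul_eq_mul]
  set δ := ρg / 2 * (a * b * ‖x - y‖^2) with hδ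
  have hδ0 : 0 ≤ δ := by
    have := mul_nonneg (mul_nonneg ha hb) (sq_nonneg ‖x - y‖)
    have h2 : 0 ≤ ρg / 2 := by linarith
    exact mul_nonneg h2 this
  have hnm : ‖a • x + b • y‖^2 = a*‖x‖^2 + b*‖y‖^2 - a*b*‖x-y‖^2 :=
    aux_comb_norm_sq x y a b hab
  have peri : ∀ i : Fin n, (⨅ v, f i v + ‖g i (a • x + b • y) - v‖^2/(2*lam)) ≤
      a * (⨅ v, f i v + ‖g i x - v‖^2/(2*lam)) + b * (⨅ v, f i v + ‖g i y - v‖^2/(2*lam))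
        + Real.sqrt d₁ * Cf * δ := by
    intro i
    have u1 : ∀ j, g i (a • x + b • y) j ≤ (a • g i x + b • g i y + δ • O) j := by
      intro j
      have hc := (hg_wc i j).2 (Set.mem_univ x) (Set.mem_univ y) ha hb hab
      simp only [smul_eq_mul] at hc
      have hcoord : (a • g i x + b • g i y + δ • O) j = a * g i x j + b * g i y j + δ := by
        have : (a • g i x + b • g i y + δ • O) j
            = a * g i x j + b * g i y j + δ * O j := rfl
        rw [this, show O j = 1 from rfl, mul_one]
      rw [hcoord]
      rw [hnm] at hc
      rw [hδ]
      linarith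
    have s1 : (⨅ v, f i v + ‖g i (a • x + b • y) - v‖^2/(2*lam))
        ≤ ⨅ v, f i v + ‖(a • g i x + b • g i y + δ • O) - v‖^2/(2*lam) := hEmono i _ _ u1
    have s2 := hElip i (a • g i x + b • g i y) (a • g i x + b • g i y + δ • O)
    have s3 : (a • g i x + b • g i y + δ • O) - (a • g i x + b • g i y) = δ • O := by abel
    have s4 : ‖δ • O‖ = δ * Real.sqrt d₁ := by
      rw [norm_smul, Real.norm_eq_abs, abs_of_nonneg hδ0, hO]
    rw [s3, s4] at s2
    have s5 := hEconv i (g i x) (g i y) a b ha hb hab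
    have s6 : Cf * (δ * Real.sqrt d₁) = Real.sqrt d₁ * Cf * δ := by ring
    linarith
  have hsum := Finset.sum_le_sum fun i (_ : i ∈ Finset.univ) => peri i
  have hnn : ((n:ℝ))⁻¹ * (n:ℝ) = 1 :=
    inv_mul_cancel₀ (Nat.cast_ne_zero.2 (by omega))
  have hninv : (0:ℝ) ≤ ((n:ℝ))⁻¹ := by positivity
  set Sm := ∑ i, ⨅ v, f i v + ‖g i (a • x + b • y) - v‖^2/(2*lam) with hSm
  set Sx := ∑ i, ⨅ v, f i v + ‖g i x - v‖^2/(2*lam) with hSx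
  set Sy := ∑ i, ⨅ v, f i v + ‖g i y - v‖^2/(2*lam) with hSy
  have hsum2 : Sm ≤ a * Sx + b * Sy + n * (Real.sqrt d₁ * Cf * δ) := by
    have expand : ∑ i : Fin n, (a * (⨅ v, f i v + ‖g i x - v‖^2/(2*lam))
        + b * (⨅ v, f i v + ‖g i y - v‖^2/(2*lam)) + Real.sqrt d₁ * Cf * δ)
        = a * Sx + b * Sy + n * (Real.sqrt d₁ * Cf * δ) := by
      rw [Finset.sum_add_distrib, Finset.sum_add_distrib, ← Finset.mul_sum, ← Finset.mul_sum,
        Finset.sum_const, Finset.card_univ, Fintype.card_fin, nsmul_eq_mul]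
    rw [← expand]
    exact hsum
  have H1 : ((n:ℝ))⁻¹ * Sm ≤ a * (((n:ℝ))⁻¹ * Sx) + b * (((n:ℝ))⁻¹ * Sy)
      + Real.sqrt d₁ * Cf * δ := by
    have h1 : ((n:ℝ))⁻¹ * Sm ≤ ((n:ℝ))⁻¹ * (a * Sx + b * Sy + n * (Real.sqrt d₁ * Cf * δ)) :=
      mul_le_mul_of_nonneg_left hsum2 hninv
    have h2 : ((n:ℝ))⁻¹ * (a * Sx + b * Sy + n * (Real.sqrt d₁ * Cf * δ))
        = a * (((n:ℝ))⁻¹ * Sx) + b * (((n:ℝ))⁻¹ * Sy)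
          + (((n:ℝ))⁻¹ * (n:ℝ)) * (Real.sqrt d₁ * Cf * δ) := by ring
    rw [h2, hnn, one_mul] at h1
    exact h1
  rw [hnm]
  rw [hδ] at H1
  nlinarith [H1]
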